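/- arXiv:0910.5396 — 3 statements merged into one kernel-verified Lean document; each statement's English description precedes it below -/
import Mathlib

section
/- Suppose B(X) contains a cycle of length greater than 4, and let g'(B) denote the minimum length of a cycle of B(X) having more than four vertices. Then for each Φ ∈ {Δ(X), Γ(X)}, either the girth of Φ equals 3, or the girth of Φ equals g'(B)/2. -/
open SimpleGraph

/-- The set of primes dividing at least one element of `X`. -/
def rho (X : Set ℕ) : Set ℕ := {p | p.Prime ∧ ∃ x ∈ X, p ∣ x}

/-- `X* = X \ {1}`. -/
def Xstar (X : Set ℕ) : Set ℕ := X \ {1}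

/-- The bipartite divisor graph `B(X)` on the disjoint union `ρ(X) ⊔ X*`:
`p ∈ ρ(X)` and `x ∈ X*` are adjacent iff `p ∣ x`. -/
def BGraph (X : Set ℕ) : SimpleGraph (↥(rho X) ⊕ ↥(Xstar X)) where
  Adj u v :=
    match u, v with
    | Sum.inl p, Sum.inr x => (p : ℕ) ∣ (x : ℕ)
    | Sum.inr x, Sum.inl p => (p : ℕ) ∣ (x : ℕ)
    | _, _ => False
  symm := ⟨by rintro (p | x) (q | y) h <;> exact h⟩
  loopless := ⟨by rintro (p | x) h <;> exact h⟩

/-- The prime vertex graph `Δ(X)` on `ρ(X)`: distinct primes `p, q` are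
adjacent iff `p*q` divides some element of `X`. -/
def DeltaGraph (X : Set ℕ) : SimpleGraph ↥(rho X) where
  Adj p q := p ≠ q ∧ ∃ x ∈ X, (p : ℕ) * (q : ℕ) ∣ x
  symm := ⟨by
    rintro p q ⟨hne, x, hx, hdvd⟩
    exact ⟨hne.symm, x, hx, by rwa [mul_comm]⟩⟩
  loopless := ⟨by rintro p ⟨hne, -⟩; exact hne rfl⟩

/-- The common divisor graph `Γ(X)` on `X*`: distinct `x, y` are adjacent
iff `gcd(x, y) > 1`. -/
def GammaGraph (X : Set ℕ) : SimpleGraph ↥(Xstar X) where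
  Adj x y := x ≠ y ∧ 1 < Nat.gcd (x : ℕ) (y : ℕ)
  symm := ⟨by
    rintro x y ⟨hne, h⟩
    exact ⟨hne.symm, by rwa [Nat.gcd_comm]⟩⟩
  loopless := ⟨by rintro x ⟨hne, -⟩; exact hne rfl⟩

section helpers
variable {V : Type*} {G : SimpleGraph V}

lemma not_edge_startEnd {u v : V} (p : G.Walk u v) (hp : p.IsPath) (h2 : 2 ≤ p.length) :
    s(u, v) ∉ p.edges := by
  cases p with
  | nil => simp
  | @cons _ b _ h q =>
    intro hmem
    rw [Walk.edges_cons, List.mem_cons] at hmem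
    rcases hmem with hmem | hmem
    · rw [Sym2.eq_iff] at hmem
      rcases hmem with ⟨-, rfl⟩ | ⟨rfl, rfl⟩
      · have hq := (Walk.isPath_iff_eq_nil (p := q)).mp hp.of_cons
        subst hq
        simp at h2
      · exact G.irrefl h
    · exact ((Walk.cons_isPath_iff h q).mp hp).2 (q.fst_mem_support_of_mem_edges hmem)

lemma isCycle_of_tail_nodup {v : V} (w : G.Walk v v) (h3 : 3 ≤ w.length)
    (hnd : w.support.tail.Nodup) : w.IsCycle := by
  cases w with
  | nil => simp at h3
  | @cons _ b _ h q =>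
    rw [Walk.cons_isCycle_iff]
    have hq : q.IsPath := by
      rw [Walk.isPath_def]
      simpa using hnd
    refine ⟨hq, fun hmem => ?_⟩
    have h2 : 2 ≤ q.length := by
      simp only [Walk.length_cons] at h3; omega
    exact not_edge_startEnd q hq h2 (by rwa [Sym2.eq_swap] at hmem)

lemma girth_le_of_isCycle {v : V} {w : G.Walk v v} (hw : w.IsCycle) : G.girth ≤ w.length := by
  have h1 : G.egirth ≤ w.length := by
    refine iInf_le_of_le v (iInf_le_of_le w (iInf_le_of_le hw le_rfl))
  have := ENat.toNat_le_toNat h1 (by simp)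
  simpa [SimpleGraph.girth] using this

lemma not_isAcyclic_of_isCycle {v : V} {w : G.Walk v v} (hw : w.IsCycle) : ¬ G.IsAcyclic :=
  fun h => h _ hw

end helpers

lemma nodup_sum_of_parts {α β : Type*} : ∀ (l : List (α ⊕ β)),
    (l.filterMap Sum.getLeft?).Nodup → (l.filterMap Sum.getRight?).Nodup → l.Nodup := by
  intro l
  induction l with
  | nil => simp
  | cons a l ih =>
    intro h1 h2
    cases a with
    | inl a =>
      rw [List.filterMap_cons] at h1 h2
      simp only [Sum.getLeft?, Sum.getRight?, List.nodup_cons] at h1 h2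
      refine List.nodup_cons.mpr ⟨fun hmem => h1.1 ?_, ih h1.2 h2⟩
      exact List.mem_filterMap.mpr ⟨Sum.inl a, hmem, rfl⟩
    | inr b =>
      rw [List.filterMap_cons] at h1 h2
      simp only [Sum.getLeft?, Sum.getRight?, List.nodup_cons] at h1 h2
      refine List.nodup_cons.mpr ⟨fun hmem => h2.1 ?_, ih h1 h2.2⟩
      exact List.mem_filterMap.mpr ⟨Sum.inr b, hmem, rfl⟩

lemma three_distinct {α : Type*} {a b c d : α} (hab : a ≠ b) (hcd : c ≠ d)
    (hne : s(a, b) ≠ s(c, d)) (P : α → Prop) (ha : P a) (hb : P b) (hc : P c) (hd : P d) :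
    ∃ u v w, u ≠ v ∧ u ≠ w ∧ v ≠ w ∧ P u ∧ P v ∧ P w := by
  by_cases h1 : c = a
  · exact ⟨a, b, d, hab, h1 ▸ hcd, fun h => hne (by rw [h1, h]), ha, hb, hd⟩
  · by_cases h2 : c = b
    · refine ⟨a, b, d, hab, ?_, h2 ▸ hcd, ha, hb, hd⟩
      exact fun h => hne (by rw [h2, ← h]; exact Sym2.eq_swap)
    · exact ⟨a, b, c, hab, fun h => h1 h.symm, fun h => h2 h.symm, ha, hb, hc⟩

lemma getLeft?_injOn {α β : Type*} : ∀ (a a' : α ⊕ β) (b : α),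
    b ∈ a.getLeft? → b ∈ a'.getLeft? → a = a' := by
  rintro (u | u) (u' | u') b hb hb' <;> simp [Sum.getLeft?] at hb hb' <;> rw [hb, hb']

lemma getRight?_injOn {α β : Type*} : ∀ (a a' : α ⊕ β) (b : β),
    b ∈ a.getRight? → b ∈ a'.getRight? → a = a' := by
  rintro (u | u) (u' | u') b hb hb' <;> simp [Sum.getRight?] at hb hb' <;> rw [hb, hb']

lemma delta_adj_of (X : Set ℕ) {a b : ↥(rho X)} {z : ℕ} (hz : z ∈ X) (hne : a ≠ b)
    (ha : (a : ℕ) ∣ z) (hb : (b : ℕ) ∣ z) : (DeltaGraph X).Adj a b :=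
  ⟨hne, z, hz, Nat.Coprime.mul_dvd_of_dvd_of_dvd
    ((Nat.coprime_primes a.2.1 b.2.1).mpr fun h => hne (Subtype.ext h)) ha hb⟩

lemma gamma_adj_of (X : Set ℕ) (hpos : ∀ x ∈ X, 0 < x) {x y : ↥(Xstar X)} {p : ℕ}
    (hp : p.Prime) (hne : x ≠ y) (hx : p ∣ (x : ℕ)) (hy : p ∣ (y : ℕ)) :
    (GammaGraph X).Adj x y := by
  refine ⟨hne, lt_of_lt_of_le hp.one_lt (Nat.le_of_dvd ?_ (Nat.dvd_gcd hx hy))⟩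
  exact Nat.gcd_pos_of_pos_left _ (hpos _ x.2.1)

lemma B_trail_to_Delta (X : Set ℕ) :
    ∀ (n : ℕ) {p q : ↥(rho X)} (w : (BGraph X).Walk (Sum.inl p) (Sum.inl q)),
      w.length = n → w.IsTrail →
      ∃ w' : (DeltaGraph X).Walk p q, 2 * w'.length = w.length ∧
        w'.support = w.support.filterMap Sum.getLeft? := by
  intro n
  induction n using Nat.strong_induction_on with
  | _ n ih =>
    intro p q w hlen ht
    cases w with
    | nil => exact ⟨.nil, by simp, by simp [Sum.getLeft?]⟩
    | @cons _ y _ h₁ w₁ =>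
      cases y with
      | inl p' => exact h₁.elim
      | inr x =>
        cases w₁ with
        | @cons _ z _ h₂ w₂ =>
          cases z with
          | inr x' => exact h₂.elim
          | inl p' =>
            obtain ⟨w₂', hl, hs⟩ := ih w₂.length (by simp only [Walk.length_cons] at hlen; omega) w₂ rfl ht.of_cons.of_cons
            rw [Walk.isTrail_cons] at ht
            have hpp' : p ≠ p' := by
              rintro rfl
              refine ht.2 ?_
              rw [Walk.edges_cons]
              exact List.mem_cons.mpr (Or.inl (Sym2.eq_swap.symm))
            have hadj : (DeltaGraph X).Adj p p' :=
              delta_adj_of X x.2.1 hpp' h₁ h₂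
            refine ⟨Walk.cons hadj w₂', ?_, ?_⟩
            · simp only [Walk.length_cons]; omega
            · simp [List.filterMap_cons, Sum.getLeft?, hs]

lemma B_trail_to_Gamma (X : Set ℕ) (hpos : ∀ x ∈ X, 0 < x) :
    ∀ (n : ℕ) {a b : ↥(Xstar X)} (w : (BGraph X).Walk (Sum.inr a) (Sum.inr b)),
      w.length = n → w.IsTrail →
      ∃ w' : (GammaGraph X).Walk a b, 2 * w'.length = w.length ∧
        w'.support = w.support.filterMap Sum.getRight? := by
  intro n
  induction n using Nat.strong_induction_on with
  | _ n ih =>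
    intro a b w hlen ht
    cases w with
    | nil => exact ⟨.nil, by simp, by simp [Sum.getRight?]⟩
    | @cons _ y _ h₁ w₁ =>
      cases y with
      | inr x' => exact h₁.elim
      | inl p =>
        cases w₁ with
        | @cons _ z _ h₂ w₂ =>
          cases z with
          | inl p' => exact h₂.elim
          | inr a' =>
            obtain ⟨w₂', hl, hs⟩ := ih w₂.length (by simp only [Walk.length_cons] at hlen; omega) w₂ rfl ht.of_cons.of_cons
            rw [Walk.isTrail_cons] at ht
            have haa' : a ≠ a' := by
              rintro rfl
              refine ht.2 ?_
              rw [Walk.edges_cons]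
              exact List.mem_cons.mpr (Or.inl (Sym2.eq_swap.symm))
            have hadj : (GammaGraph X).Adj a a' :=
              gamma_adj_of X hpos p.2.1 haa' h₁ h₂
            refine ⟨Walk.cons hadj w₂', ?_, ?_⟩
            · simp only [Walk.length_cons]; omega
            · simp [List.filterMap_cons, Sum.getRight?, hs]

lemma Delta_walk_to_B (X : Set ℕ)
    (F : ∀ a b : ↥(rho X), (DeltaGraph X).Adj a b → ↥(Xstar X))
    (hF1 : ∀ (a b : ↥(rho X)) (h : (DeltaGraph X).Adj a b), (a : ℕ) ∣ (F a b h : ℕ))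
    (hF2 : ∀ (a b : ↥(rho X)) (h : (DeltaGraph X).Adj a b), (b : ℕ) ∣ (F a b h : ℕ))
    {p q : ↥(rho X)} (w : (DeltaGraph X).Walk p q) :
    ∃ W : (BGraph X).Walk (Sum.inl p) (Sum.inl q),
      W.length = 2 * w.length ∧
      W.support.filterMap Sum.getLeft? = w.support ∧
      W.support.filterMap Sum.getRight? = w.darts.map (fun d => F d.fst d.snd d.adj) := by
  induction w with
  | nil => exact ⟨.nil, by simp, by simp [Sum.getLeft?], by simp [Sum.getRight?]⟩
  | @cons a b c h wtl ih =>
    obtain ⟨W, hL, h1, h2⟩ := ih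
    refine ⟨Walk.cons (show (BGraph X).Adj (.inl a) (.inr (F a b h)) from hF1 a b h)
            (Walk.cons (show (BGraph X).Adj (.inr (F a b h)) (.inl b) from hF2 a b h) W),
            ?_, ?_, ?_⟩
    · simp only [Walk.length_cons]; omega
    · simp [List.filterMap_cons, Sum.getLeft?, Sum.getRight?, h1]
    · simp [List.filterMap_cons, Sum.getLeft?, Sum.getRight?, h2, Walk.darts_cons]

lemma Gamma_walk_to_B (X : Set ℕ)
    (F : ∀ a b : ↥(Xstar X), (GammaGraph X).Adj a b → ↥(rho X))
    (hF1 : ∀ (a b : ↥(Xstar X)) (h : (GammaGraph X).Adj a b), ((F a b h : ℕ)) ∣ (a : ℕ))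
    (hF2 : ∀ (a b : ↥(Xstar X)) (h : (GammaGraph X).Adj a b), ((F a b h : ℕ)) ∣ (b : ℕ))
    {p q : ↥(Xstar X)} (w : (GammaGraph X).Walk p q) :
    ∃ W : (BGraph X).Walk (Sum.inr p) (Sum.inr q),
      W.length = 2 * w.length ∧
      W.support.filterMap Sum.getRight? = w.support ∧
      W.support.filterMap Sum.getLeft? = w.darts.map (fun d => F d.fst d.snd d.adj) := by
  induction w with
  | nil => exact ⟨.nil, by simp, by simp [Sum.getRight?], by simp [Sum.getLeft?]⟩
  | @cons a b c h wtl ih =>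
    obtain ⟨W, hL, h1, h2⟩ := ih
    refine ⟨Walk.cons (show (BGraph X).Adj (.inr a) (.inl (F a b h)) from hF1 a b h)
            (Walk.cons (show (BGraph X).Adj (.inl (F a b h)) (.inr b) from hF2 a b h) W),
            ?_, ?_, ?_⟩
    · simp only [Walk.length_cons]; omega
    · simp [List.filterMap_cons, Sum.getLeft?, Sum.getRight?, h1]
    · simp [List.filterMap_cons, Sum.getLeft?, Sum.getRight?, h2, Walk.darts_cons]

theorem stmt_7 (X : Set ℕ) (hne : X.Nonempty) (hpos : ∀ x ∈ X, 0 < x)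
    (hX1 : X ≠ {1})
    (hcyc : ∃ (v : ↥(rho X) ⊕ ↥(Xstar X)) (w : (BGraph X).Walk v v),
      w.IsCycle ∧ 4 < w.length)
    (g' : ℕ)
    (hg' : g' = sInf {n : ℕ | ∃ (v : ↥(rho X) ⊕ ↥(Xstar X)) (w : (BGraph X).Walk v v),
      w.IsCycle ∧ 4 < w.length ∧ w.length = n}) :
    ((DeltaGraph X).girth = 3 ∨ (DeltaGraph X).girth = g' / 2) ∧
    ((GammaGraph X).girth = 3 ∨ (GammaGraph X).girth = g' / 2) := by
  classical
  obtain ⟨v1, w1, hc1, h41⟩ := hcyc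
  have hg'mem : g' ∈ {n : ℕ | ∃ (v : ↥(rho X) ⊕ ↥(Xstar X)) (w : (BGraph X).Walk v v),
      w.IsCycle ∧ 4 < w.length ∧ w.length = n} := by
    rw [hg']
    exact Nat.sInf_mem ⟨w1.length, ⟨v1, w1, hc1, h41, rfl⟩⟩
  obtain ⟨v₀, W₀, hW₀c, hW₀4, hW₀len⟩ := hg'mem
  have hmin : ∀ (v : ↥(rho X) ⊕ ↥(Xstar X)) (w : (BGraph X).Walk v v),
      w.IsCycle → 4 < w.length → g' ≤ w.length := by
    intro v w hc h4
    rw [hg']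
    exact Nat.sInf_le ⟨v, w, hc, h4, rfl⟩
  have hvert : (∃ p, Sum.inl p ∈ W₀.support) ∧ (∃ x, Sum.inr x ∈ W₀.support) := by
    cases W₀ with
    | nil => exact absurd hW₀c (by simp)
    | @cons _ y _ h w' =>
      rcases v₀ with p | x
      · rcases y with p' | x'
        · exact h.elim
        · exact ⟨⟨p, Walk.start_mem_support _⟩, ⟨x', by simp⟩⟩
      · rcases y with p' | x'
        · exact ⟨⟨p', by simp⟩, ⟨x, Walk.start_mem_support _⟩⟩
        · exact h.elim
  obtain ⟨⟨p₀, hp₀⟩, ⟨x₀, hx₀⟩⟩ := hvert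
  constructor
  · -- Delta part
    set WΔ := W₀.rotate _ hp₀ with hWΔdef
    have hWΔc : WΔ.IsCycle := hW₀c.rotate hp₀
    have hWΔlen : WΔ.length = g' := by
      have h1 := congrArg Walk.length (W₀.take_spec hp₀)
      rw [Walk.length_append] at h1
      have h2 : WΔ.length = (W₀.dropUntil _ hp₀).length + (W₀.takeUntil _ hp₀).length :=
        Walk.length_append _ _
      omega
    obtain ⟨wΔ, hwΔ2, hwΔs⟩ := B_trail_to_Delta X WΔ.length WΔ rfl hWΔc.isTrail
    have hk3 : 3 ≤ wΔ.length := by omega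
    have hwΔtail : wΔ.support.tail = WΔ.support.tail.filterMap Sum.getLeft? := by
      have h := hwΔs
      rw [WΔ.support_eq_cons, List.filterMap_cons] at h
      simp only [Sum.getLeft?] at h
      rw [h]
      rfl
    have hwΔc : wΔ.IsCycle := by
      refine isCycle_of_tail_nodup _ hk3 ?_
      rw [hwΔtail]
      exact List.Nodup.filterMap getLeft?_injOn hWΔc.support_nodup
    have hgle : (DeltaGraph X).girth ≤ wΔ.length := girth_le_of_isCycle hwΔc
    have hnac : ¬ (DeltaGraph X).IsAcyclic := not_isAcyclic_of_isCycle hwΔc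
    by_cases h3 : (DeltaGraph X).girth = 3
    · exact Or.inl h3
    right
    obtain ⟨pg, cg, hcg, hcglen⟩ := (SimpleGraph.exists_girth_eq_length).mpr hnac
    have hm3 : 3 ≤ (DeltaGraph X).girth := SimpleGraph.three_le_girth hnac
    have hm4 : 4 ≤ cg.length := by omega
    have hFex : ∀ a b : ↥(rho X), (DeltaGraph X).Adj a b →
        ∃ z : ↥(Xstar X), (a : ℕ) ∣ (z : ℕ) ∧ (b : ℕ) ∣ (z : ℕ) := by
      rintro a b ⟨hne', z, hzX, hdvd⟩
      have ha : (a : ℕ) ∣ z := dvd_trans (dvd_mul_right _ _) hdvd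
      have hb : (b : ℕ) ∣ z := dvd_trans (dvd_mul_left _ _) hdvd
      have hz1 : z ≠ 1 := by
        intro hz
        rw [hz] at ha
        have h1 := Nat.le_of_dvd one_pos ha
        have h2 := a.2.1.two_le
        omega
      exact ⟨⟨z, hzX, hz1⟩, ha, hb⟩
    choose F hF1 hF2 using hFex
    obtain ⟨W, hWlen, hWl, hWr⟩ := Delta_walk_to_B X F hF1 hF2 cg
    have hWtailL : W.support.tail.filterMap Sum.getLeft? = cg.support.tail := by
      have h := hWl
      rw [W.support_eq_cons, cg.support_eq_cons, List.filterMap_cons] at h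
      simp only [Sum.getLeft?] at h
      simpa using congrArg List.tail h
    have hWtailR : W.support.tail.filterMap Sum.getRight? =
        cg.darts.map (fun d => F d.fst d.snd d.adj) := by
      have h := hWr
      rw [W.support_eq_cons, List.filterMap_cons] at h
      simpa [Sum.getRight?] using h
    by_cases hnd : (cg.darts.map (fun d => F d.fst d.snd d.adj)).Nodup
    · have hWc : W.IsCycle := by
        refine isCycle_of_tail_nodup _ (by omega) ?_
        exact nodup_sum_of_parts _ (hWtailL ▸ hcg.support_nodup) (hWtailR ▸ hnd)
      have hgmin := hmin _ W hWc (by omega)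
      omega
    · exfalso
      have he : (cg.darts.map SimpleGraph.Dart.edge).Nodup := hcg.edges_nodup
      have hdnd : cg.darts.Nodup := he.of_map _
      obtain ⟨d1, hd1, d2, hd2, hFeq, hdne⟩ :
          ∃ d1 ∈ cg.darts, ∃ d2 ∈ cg.darts,
            F d1.fst d1.snd d1.adj = F d2.fst d2.snd d2.adj ∧ d1 ≠ d2 := by
        by_contra hcon
        push_neg at hcon
        exact hnd (List.Nodup.map_on hcon hdnd)
      have hedgene : ¬ (s(d1.fst, d1.snd) = s(d2.fst, d2.snd)) := by
        intro hEq
        exact hdne (List.inj_on_of_nodup_map he hd1 hd2 hEq)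
      have hdvd2a : (d2.fst : ℕ) ∣ ((F d1.fst d1.snd d1.adj : ↥(Xstar X)) : ℕ) := by
        rw [hFeq]; exact hF1 _ _ d2.adj
      have hdvd2b : (d2.snd : ℕ) ∣ ((F d1.fst d1.snd d1.adj : ↥(Xstar X)) : ℕ) := by
        rw [hFeq]; exact hF2 _ _ d2.adj
      obtain ⟨u, v, w3, huv, huw, hvw, hu, hv, hw⟩ :=
        three_distinct d1.adj.ne d2.adj.ne hedgene
          (fun a : ↥(rho X) => (a : ℕ) ∣ ((F d1.fst d1.snd d1.adj : ↥(Xstar X)) : ℕ))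
          (hF1 _ _ d1.adj) (hF2 _ _ d1.adj) hdvd2a hdvd2b
      set z : ↥(Xstar X) := F d1.fst d1.snd d1.adj with hzdef
      have hzuv : (DeltaGraph X).Adj u v := delta_adj_of X z.2.1 huv hu hv
      have hzvw : (DeltaGraph X).Adj v w3 := delta_adj_of X z.2.1 hvw hv hw
      have hzwu : (DeltaGraph X).Adj w3 u := delta_adj_of X z.2.1 (fun h => huw h.symm) hw hu
      have htri : (Walk.cons hzuv (Walk.cons hzvw (Walk.cons hzwu Walk.nil))).IsCycle := by
        refine isCycle_of_tail_nodup _ (by simp) ?_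
        simp only [Walk.support_cons, Walk.support_nil, List.tail_cons]
        refine List.nodup_cons.mpr ⟨?_, List.nodup_cons.mpr ⟨?_, List.nodup_singleton _⟩⟩
        · intro hm
          rcases List.mem_cons.mp hm with h | hm2
          · exact hvw h
          · exact huv (List.mem_singleton.mp hm2).symm
        · intro hm
          exact huw (List.mem_singleton.mp hm).symm
      have hle3 := girth_le_of_isCycle htri
      simp only [Walk.length_cons, Walk.length_nil] at hle3
      omega
  · -- Gamma part
    set WΓ := W₀.rotate _ hx₀ with hWΓdef
    have hWΓc : WΓ.IsCycle := hW₀c.rotate hx₀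
    have hWΓlen : WΓ.length = g' := by
      have h1 := congrArg Walk.length (W₀.take_spec hx₀)
      rw [Walk.length_append] at h1
      have h2 : WΓ.length = (W₀.dropUntil _ hx₀).length + (W₀.takeUntil _ hx₀).length :=
        Walk.length_append _ _
      omega
    obtain ⟨wΓ, hwΓ2, hwΓs⟩ := B_trail_to_Gamma X hpos WΓ.length WΓ rfl hWΓc.isTrail
    have hk3 : 3 ≤ wΓ.length := by omega
    have hwΓtail : wΓ.support.tail = WΓ.support.tail.filterMap Sum.getRight? := by
      have h := hwΓs
      rw [WΓ.support_eq_cons, List.filterMap_cons] at h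
      simp only [Sum.getRight?] at h
      rw [h]
      rfl
    have hwΓc : wΓ.IsCycle := by
      refine isCycle_of_tail_nodup _ hk3 ?_
      rw [hwΓtail]
      exact List.Nodup.filterMap getRight?_injOn hWΓc.support_nodup
    have hgle : (GammaGraph X).girth ≤ wΓ.length := girth_le_of_isCycle hwΓc
    have hnac : ¬ (GammaGraph X).IsAcyclic := not_isAcyclic_of_isCycle hwΓc
    by_cases h3 : (GammaGraph X).girth = 3
    · exact Or.inl h3
    right
    obtain ⟨xg, cg, hcg, hcglen⟩ := (SimpleGraph.exists_girth_eq_length).mpr hnac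
    have hm3 : 3 ≤ (GammaGraph X).girth := SimpleGraph.three_le_girth hnac
    have hm4 : 4 ≤ cg.length := by omega
    have hFex : ∀ a b : ↥(Xstar X), (GammaGraph X).Adj a b →
        ∃ z : ↥(rho X), (z : ℕ) ∣ (a : ℕ) ∧ (z : ℕ) ∣ (b : ℕ) := by
      rintro a b ⟨hne', hgcd⟩
      obtain ⟨r, hr, hrdvd⟩ := Nat.exists_prime_and_dvd
        (fun h : Nat.gcd (a : ℕ) (b : ℕ) = 1 => by omega)
      have hra : r ∣ (a : ℕ) := dvd_trans hrdvd (Nat.gcd_dvd_left _ _)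
      have hrb : r ∣ (b : ℕ) := dvd_trans hrdvd (Nat.gcd_dvd_right _ _)
      exact ⟨⟨r, hr, a.1, a.2.1, hra⟩, hra, hrb⟩
    choose F hF1 hF2 using hFex
    obtain ⟨W, hWlen, hWl, hWr⟩ := Gamma_walk_to_B X F hF1 hF2 cg
    have hWtailR : W.support.tail.filterMap Sum.getRight? = cg.support.tail := by
      have h := hWl
      rw [W.support_eq_cons, cg.support_eq_cons, List.filterMap_cons] at h
      simp only [Sum.getRight?] at h
      simpa using congrArg List.tail h
    have hWtailL : W.support.tail.filterMap Sum.getLeft? =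
        cg.darts.map (fun d => F d.fst d.snd d.adj) := by
      have h := hWr
      rw [W.support_eq_cons, List.filterMap_cons] at h
      simpa [Sum.getLeft?] using h
    by_cases hnd : (cg.darts.map (fun d => F d.fst d.snd d.adj)).Nodup
    · have hWc : W.IsCycle := by
        refine isCycle_of_tail_nodup _ (by omega) ?_
        exact nodup_sum_of_parts _ (hWtailL ▸ hnd) (hWtailR ▸ hcg.support_nodup)
      have hgmin := hmin _ W hWc (by omega)
      omega
    · exfalso
      have he : (cg.darts.map SimpleGraph.Dart.edge).Nodup := hcg.edges_nodup
      have hdnd : cg.darts.Nodup := he.of_map _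
      obtain ⟨d1, hd1, d2, hd2, hFeq, hdne⟩ :
          ∃ d1 ∈ cg.darts, ∃ d2 ∈ cg.darts,
            F d1.fst d1.snd d1.adj = F d2.fst d2.snd d2.adj ∧ d1 ≠ d2 := by
        by_contra hcon
        push_neg at hcon
        exact hnd (List.Nodup.map_on hcon hdnd)
      have hedgene : ¬ (s(d1.fst, d1.snd) = s(d2.fst, d2.snd)) := by
        intro hEq
        exact hdne (List.inj_on_of_nodup_map he hd1 hd2 hEq)
      have hdvd2a : ((F d1.fst d1.snd d1.adj : ↥(rho X)) : ℕ) ∣ (d2.fst : ℕ) := by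
        rw [hFeq]; exact hF1 _ _ d2.adj
      have hdvd2b : ((F d1.fst d1.snd d1.adj : ↥(rho X)) : ℕ) ∣ (d2.snd : ℕ) := by
        rw [hFeq]; exact hF2 _ _ d2.adj
      obtain ⟨u, v, w3, huv, huw, hvw, hu, hv, hw⟩ :=
        three_distinct d1.adj.ne d2.adj.ne hedgene
          (fun a : ↥(Xstar X) => ((F d1.fst d1.snd d1.adj : ↥(rho X)) : ℕ) ∣ (a : ℕ))
          (hF1 _ _ d1.adj) (hF2 _ _ d1.adj) hdvd2a hdvd2b
      set z : ↥(rho X) := F d1.fst d1.snd d1.adj with hzdef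
      have hzuv : (GammaGraph X).Adj u v := gamma_adj_of X hpos z.2.1 huv hu hv
      have hzvw : (GammaGraph X).Adj v w3 := gamma_adj_of X hpos z.2.1 hvw hv hw
      have hzwu : (GammaGraph X).Adj w3 u :=
        gamma_adj_of X hpos z.2.1 (fun h => huw h.symm) hw hu
      have htri : (Walk.cons hzuv (Walk.cons hzvw (Walk.cons hzwu Walk.nil))).IsCycle := by
        refine isCycle_of_tail_nodup _ (by simp) ?_
        simp only [Walk.support_cons, Walk.support_nil, List.tail_cons]
        refine List.nodup_cons.mpr ⟨?_, List.nodup_cons.mpr ⟨?_, List.nodup_singleton _⟩⟩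
        · intro hm
          rcases List.mem_cons.mp hm with h | hm2
          · exact hvw h
          · exact huv (List.mem_singleton.mp hm2).symm
        · intro hm
          exact huw (List.mem_singleton.mp hm).symm
      have hle3 := girth_le_of_isCycle htri
      simp only [Walk.length_cons, Walk.length_nil] at hle3
      omega
end

section
/- For every subset K of the three-element set {B, Δ, Γ} there exists a nonempty set X of positive integers with X ≠ {1} such that, among the three graphs B(X), Δ(X), Γ(X), exactly those labelled by elements of K are acyclic and the remaining ones contain a cycle. -/
open SimpleGraph

/-! ### Auxiliary graph-theoretic lemmas -/

section Aux

variable {V : Type*} {G : SimpleGraph V}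

lemma cycle_two_neighbors {u : V} {q : G.Walk u u} (hq : q.IsCycle) :
    ∃ a b, a ≠ b ∧ G.Adj u a ∧ G.Adj u b ∧ a ∈ q.support ∧ b ∈ q.support := by
  cases q with
  | nil => exact absurd hq (Walk.IsCycle.not_of_nil)
  | @cons _ a _ h1 q1 =>
    rw [Walk.cons_isCycle_iff] at hq
    obtain ⟨hpath, hedge⟩ := hq
    cases q1 with
    | nil => exact absurd h1 (G.loopless.irrefl u)
    | @cons _ c _ h' q2 =>
      obtain ⟨b, r, h2, heq⟩ := Walk.exists_cons_eq_concat h' q2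
      refine ⟨a, b, ?_, h1, h2.symm, ?_, ?_⟩
      · rintro rfl
        apply hedge
        rw [heq, Walk.edges_concat, List.concat_eq_append, List.mem_append]
        right
        simp [Sym2.eq_swap]
      · simp [Walk.support_cons]
      · rw [Walk.support_cons, heq, Walk.support_concat]
        simp only [List.mem_cons, List.mem_append]
        exact Or.inr (Or.inl (Walk.end_mem_support r))

/-- If there is a "height" function such that adjacent vertices have different
heights and every vertex has at most one lower neighbour, then `G` is acyclic. -/
lemma acyclic_of_height [DecidableEq V] (h : V → ℕ)
    (h1 : ∀ u v, G.Adj u v → h u ≠ h v)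
    (h2 : ∀ u v w, G.Adj u v → G.Adj u w → h v < h u → h w < h u → v = w) :
    G.IsAcyclic := by
  intro v p hp
  obtain ⟨u, hu⟩ : ∃ u, u ∈ p.support.argmax h := by
    cases hargm : p.support.argmax h with
    | none => exact absurd (List.argmax_eq_none.mp hargm) p.support_ne_nil
    | some u => exact ⟨u, by simp [hargm, Option.mem_def]⟩
  have humem : u ∈ p.support := List.argmax_mem hu
  have hmax : ∀ a ∈ p.support, h a ≤ h u := fun a ha => List.le_of_mem_argmax ha hu
  have hq : (p.rotate u humem).IsCycle := hp.rotate humem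
  obtain ⟨a, b, hab, hua, hub, hamem, hbmem⟩ := cycle_two_neighbors hq
  have hrot := Walk.support_rotate p u humem
  have hsub : ∀ x, x ∈ (p.rotate u humem).support → x ≠ u → x ∈ p.support := by
    intro x hx hxu
    rcases (Walk.mem_support_iff _).mp hx with rfl | hx'
    · exact absurd rfl hxu
    · exact List.mem_of_mem_tail (hrot.perm.mem_iff.mp hx')
  have ha' : h a < h u :=
    lt_of_le_of_ne (hmax a (hsub a hamem hua.ne')) (fun e => h1 u a hua e.symm)
  have hb' : h b < h u :=
    lt_of_le_of_ne (hmax b (hsub b hbmem hub.ne')) (fun e => h1 u b hub e.symm)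
  exact hab (h2 u a b hua hub ha' hb')

/-- A graph whose vertices all lie in a two element set is acyclic. -/
lemma acyclic_of_two [DecidableEq V] (a b : V) (hv : ∀ v : V, v = a ∨ v = b) :
    G.IsAcyclic := by
  apply acyclic_of_height (fun v => if v = a then 0 else 1)
  · intro u v huv
    have hne := huv.ne
    by_cases hua : u = a <;> by_cases hva : v = a
    · exact absurd (hua.trans hva.symm) hne
    · simp [hua, hva]
    · simp [hua, hva]
    · exact absurd (((hv u).resolve_left hua).trans ((hv v).resolve_left hva).symm) hne
  · intro u v w huv huw hvu hwu
    have h1 : v = a := by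
      by_contra hva
      rw [if_neg hva] at hvu
      by_cases hua : u = a
      · rw [if_pos hua] at hvu; omega
      · rw [if_neg hua] at hvu; omega
    have h2 : w = a := by
      by_contra hwa
      rw [if_neg hwa] at hwu
      by_cases hua : u = a
      · rw [if_pos hua] at hwu; omega
      · rw [if_neg hua] at hwu; omega
    rw [h1, h2]

lemma not_acyclic_of_triangle {a b c : V} (hab : G.Adj a b) (hbc : G.Adj b c)
    (hca : G.Adj c a) : ¬ G.IsAcyclic := by
  intro hG
  apply hG (Walk.cons hab (Walk.cons hbc (Walk.cons hca Walk.nil)))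
  rw [Walk.isCycle_def]
  refine ⟨?_, by simp, ?_⟩
  · rw [Walk.isTrail_def]
    simp only [Walk.edges_cons, Walk.edges_nil, List.nodup_cons, List.mem_cons,
      List.not_mem_nil, or_false, List.nodup_nil, and_true, Sym2.eq, Sym2.rel_iff',
      Prod.mk.injEq, Prod.swap_prod_mk]
    have h1 := hab.ne; have h2 := hbc.ne; have h3 := hca.ne
    have h4 := hca.ne'
    constructor
    · rintro (⟨rfl, rfl⟩ | ⟨rfl, rfl⟩) <;> simp_all
    constructor
    · rintro (⟨rfl, rfl⟩ | ⟨rfl, rfl⟩) <;> simp_all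
    · exact not_false
  · simp only [Walk.support_cons, Walk.support_nil, List.tail_cons, List.nodup_cons,
      List.mem_cons, List.not_mem_nil, or_false, List.nodup_nil, and_true]
    exact ⟨by simpa using ⟨hbc.ne, hab.ne'⟩, by simpa using hca.ne⟩

lemma not_acyclic_of_square {a b c d : V} (hab : G.Adj a b) (hbc : G.Adj b c)
    (hcd : G.Adj c d) (hda : G.Adj d a) (hac : a ≠ c) (hbd : b ≠ d) : ¬ G.IsAcyclic := by
  intro hG
  apply hG (Walk.cons hab (Walk.cons hbc (Walk.cons hcd (Walk.cons hda Walk.nil))))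
  rw [Walk.isCycle_def]
  have h1 := hab.ne; have h2 := hbc.ne; have h3 := hcd.ne; have h4 := hda.ne
  have h1' := hab.ne'; have h2' := hbc.ne'; have h3' := hcd.ne'; have h4' := hda.ne'
  refine ⟨?_, by simp, ?_⟩
  · rw [Walk.isTrail_def]
    simp only [Walk.edges_cons, Walk.edges_nil, List.nodup_cons, List.mem_cons,
      List.not_mem_nil, or_false, List.nodup_nil, and_true, Sym2.eq, Sym2.rel_iff',
      Prod.mk.injEq, Prod.swap_prod_mk]
    refine ⟨?_, ?_, ?_, not_false⟩ <;>
      · rintro ((⟨rfl, rfl⟩ | ⟨rfl, rfl⟩) | (⟨rfl, rfl⟩ | ⟨rfl, rfl⟩)) <;> simp_all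
  · simp only [Walk.support_cons, Walk.support_nil, List.tail_cons, List.nodup_cons,
      List.mem_cons, List.not_mem_nil, or_false, List.nodup_nil, and_true]
    refine ⟨?_, ?_, ?_⟩ <;> simp_all [eq_comm]

end Aux

/-! ### Arithmetic enumeration lemmas -/

lemma prime_dvd_60 {p : ℕ} (hp : p.Prime) (h : p ∣ 60) : p = 2 ∨ p = 3 ∨ p = 5 := by
  have h1 := hp.two_le
  have h2 := Nat.le_of_dvd (by norm_num) h
  interval_cases p <;> revert h hp <;> decide

lemma prime_dvd_30 {p : ℕ} (hp : p.Prime) (h : p ∣ 30) : p = 2 ∨ p = 3 ∨ p = 5 :=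
  prime_dvd_60 hp (h.trans (by norm_num))

lemma prime_dvd_12 {p : ℕ} (hp : p.Prime) (h : p ∣ 12) : p = 2 ∨ p = 3 := by
  have h1 := hp.two_le
  have h2 := Nat.le_of_dvd (by norm_num) h
  interval_cases p <;> revert h hp <;> decide

lemma prime_dvd_6 {p : ℕ} (hp : p.Prime) (h : p ∣ 6) : p = 2 ∨ p = 3 :=
  prime_dvd_12 hp (h.trans (by norm_num))

lemma prime_dvd_8 {p : ℕ} (hp : p.Prime) (h : p ∣ 8) : p = 2 := by
  have h1 := hp.two_le
  have h2 := Nat.le_of_dvd (by norm_num) h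
  interval_cases p <;> revert h hp <;> decide

lemma prime_dvd_4 {p : ℕ} (hp : p.Prime) (h : p ∣ 4) : p = 2 :=
  prime_dvd_8 hp (h.trans (by norm_num))

lemma prime_dvd_2 {p : ℕ} (hp : p.Prime) (h : p ∣ 2) : p = 2 :=
  prime_dvd_4 hp (h.trans (by norm_num))

/-! ### Acyclicity criteria for the three graphs -/

/-- If `ρ(X)` has at most one element, `B(X)` is acyclic. -/
lemma BGraph_acyclic_left {X : Set ℕ} (hX : ∀ p q : ℕ, p ∈ rho X → q ∈ rho X → p = q) :
    (BGraph X).IsAcyclic := by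
  apply acyclic_of_height (fun u => match u with | Sum.inl _ => 0 | Sum.inr _ => 1)
  · rintro (p | x) (q | y) h
    · exact h.elim
    · simp
    · simp
    · exact h.elim
  · rintro (p | x) (q | y) (r | z) h h' hlt hlt'
    any_goals first | exact h.elim | exact h'.elim
    · simp at hlt
    · exact congrArg Sum.inl (Subtype.ext (hX q r q.2 r.2))

/-- If `X*` has at most one element, `B(X)` is acyclic. -/
lemma BGraph_acyclic_right {X : Set ℕ} (hX : ∀ x y : ℕ, x ∈ Xstar X → y ∈ Xstar X → x = y) :
    (BGraph X).IsAcyclic := by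
  apply acyclic_of_height (fun u => match u with | Sum.inl _ => 1 | Sum.inr _ => 0)
  · rintro (p | x) (q | y) h
    · exact h.elim
    · simp
    · simp
    · exact h.elim
  · rintro (p | x) (q | y) (r | z) h h' hlt hlt'
    any_goals first | exact h.elim | exact h'.elim
    · exact congrArg Sum.inr (Subtype.ext (hX y z y.2 z.2))
    · simp at hlt

/-! ### Generic constructions of cycles in the three graphs -/

lemma BGraph_not_acyclic_sq {X : Set ℕ} {x y : ℕ} (hx : x ∈ Xstar X) (hy : y ∈ Xstar X)
    (h2x : 2 ∣ x) (h3x : 3 ∣ x) (h2y : 2 ∣ y) (h3y : 3 ∣ y) (hxy : x ≠ y) :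
    ¬ (BGraph X).IsAcyclic := by
  have hp2 : (2:ℕ) ∈ rho X := ⟨Nat.prime_two, x, hx.1, h2x⟩
  have hp3 : (3:ℕ) ∈ rho X := ⟨Nat.prime_three, x, hx.1, h3x⟩
  exact not_acyclic_of_square (G := BGraph X)
    (a := Sum.inl ⟨2, hp2⟩) (b := Sum.inr ⟨x, hx⟩) (c := Sum.inl ⟨3, hp3⟩)
    (d := Sum.inr ⟨y, hy⟩) h2x h3x h3y h2y
    (by simp) (by simp [Subtype.ext_iff, hxy])

lemma Delta_not_acyclic_235 {X : Set ℕ} {m : ℕ} (hm : m ∈ X) (h30 : 30 ∣ m) :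
    ¬ (DeltaGraph X).IsAcyclic := by
  have hp2 : (2:ℕ) ∈ rho X := ⟨Nat.prime_two, m, hm, dvd_trans (by norm_num) h30⟩
  have hp3 : (3:ℕ) ∈ rho X := ⟨Nat.prime_three, m, hm, dvd_trans (by norm_num) h30⟩
  have hp5 : (5:ℕ) ∈ rho X := ⟨by norm_num, m, hm, dvd_trans (by norm_num) h30⟩
  exact not_acyclic_of_triangle (G := DeltaGraph X)
    (a := ⟨2, hp2⟩) (b := ⟨3, hp3⟩) (c := ⟨5, hp5⟩)
    ⟨ne_of_apply_ne Subtype.val (by norm_num), m, hm, dvd_trans (by norm_num) h30⟩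
    ⟨ne_of_apply_ne Subtype.val (by norm_num), m, hm, dvd_trans (by norm_num) h30⟩
    ⟨ne_of_apply_ne Subtype.val (by norm_num), m, hm, dvd_trans (by norm_num) h30⟩

lemma Gamma_not_acyclic_tri {X : Set ℕ} {a b c : ℕ} (ha : a ∈ Xstar X) (hb : b ∈ Xstar X)
    (hc : c ∈ Xstar X) (hab : a ≠ b) (hbc : b ≠ c) (hca : c ≠ a)
    (g1 : 1 < Nat.gcd a b) (g2 : 1 < Nat.gcd b c) (g3 : 1 < Nat.gcd c a) :
    ¬ (GammaGraph X).IsAcyclic :=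
  not_acyclic_of_triangle (G := GammaGraph X)
    (a := ⟨a, ha⟩) (b := ⟨b, hb⟩) (c := ⟨c, hc⟩)
    ⟨ne_of_apply_ne Subtype.val hab, g1⟩
    ⟨ne_of_apply_ne Subtype.val hbc, g2⟩
    ⟨ne_of_apply_ne Subtype.val hca, g3⟩

/-! ### The eight example sets -/

/-! #### X₁ = {2} : all three acyclic -/

lemma X1_B : (BGraph ({2} : Set ℕ)).IsAcyclic := by
  apply BGraph_acyclic_left
  rintro p q ⟨hp, x, hx, hdx⟩ ⟨hq, y, hy, hdy⟩
  simp only [Set.mem_singleton_iff] at hx hy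
  subst hx; subst hy
  rw [prime_dvd_2 hp hdx, prime_dvd_2 hq hdy]

lemma X1_D : (DeltaGraph ({2} : Set ℕ)).IsAcyclic := by
  have hp2 : (2:ℕ) ∈ rho ({2} : Set ℕ) := ⟨Nat.prime_two, 2, rfl, dvd_rfl⟩
  apply acyclic_of_two ⟨2, hp2⟩ ⟨2, hp2⟩
  rintro ⟨p, hp, x, hx, hdx⟩
  simp only [Set.mem_singleton_iff] at hx
  subst hx
  exact Or.inl (Subtype.ext (prime_dvd_2 hp hdx))

lemma X1_G : (GammaGraph ({2} : Set ℕ)).IsAcyclic := by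
  have h2 : (2:ℕ) ∈ Xstar ({2} : Set ℕ) := ⟨rfl, by norm_num⟩
  apply acyclic_of_two ⟨2, h2⟩ ⟨2, h2⟩
  rintro ⟨x, hx, -⟩
  simp only [Set.mem_singleton_iff] at hx
  exact Or.inl (Subtype.ext hx)

/-! #### X₂ = {2,4,8} : B, Δ acyclic; Γ has a triangle -/

lemma X2_rho : ∀ p ∈ rho ({2,4,8} : Set ℕ), p = 2 := by
  rintro p ⟨hp, x, hx, hdx⟩
  simp only [Set.mem_insert_iff, Set.mem_singleton_iff] at hx
  rcases hx with rfl | rfl | rfl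
  · exact prime_dvd_2 hp hdx
  · exact prime_dvd_4 hp hdx
  · exact prime_dvd_8 hp hdx

lemma X2_B : (BGraph ({2,4,8} : Set ℕ)).IsAcyclic :=
  BGraph_acyclic_left (fun p q hp hq => (X2_rho p hp).trans (X2_rho q hq).symm)

lemma X2_D : (DeltaGraph ({2,4,8} : Set ℕ)).IsAcyclic := by
  have hp2 : (2:ℕ) ∈ rho ({2,4,8} : Set ℕ) := ⟨Nat.prime_two, 2, by simp, dvd_rfl⟩
  apply acyclic_of_two ⟨2, hp2⟩ ⟨2, hp2⟩
  exact fun v => Or.inl (Subtype.ext (X2_rho v v.2))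

lemma X2_G : ¬ (GammaGraph ({2,4,8} : Set ℕ)).IsAcyclic := by
  apply Gamma_not_acyclic_tri (a := 2) (b := 4) (c := 8)
    ⟨by simp, by norm_num⟩ ⟨by simp, by norm_num⟩ ⟨by simp, by norm_num⟩ <;> norm_num

/-! #### X₃ = {30} : B, Γ acyclic; Δ has a triangle -/

lemma X3_B : (BGraph ({30} : Set ℕ)).IsAcyclic := by
  apply BGraph_acyclic_right
  rintro x y ⟨hx, -⟩ ⟨hy, -⟩
  simp only [Set.mem_singleton_iff] at hx hy
  rw [hx, hy]

lemma X3_D : ¬ (DeltaGraph ({30} : Set ℕ)).IsAcyclic :=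
  Delta_not_acyclic_235 (m := 30) rfl dvd_rfl

lemma X3_G : (GammaGraph ({30} : Set ℕ)).IsAcyclic := by
  have h30 : (30:ℕ) ∈ Xstar ({30} : Set ℕ) := ⟨rfl, by norm_num⟩
  apply acyclic_of_two ⟨30, h30⟩ ⟨30, h30⟩
  rintro ⟨x, hx, -⟩
  simp only [Set.mem_singleton_iff] at hx
  exact Or.inl (Subtype.ext hx)

/-! #### X₄ = {2,4,30} : B acyclic; Δ and Γ have triangles -/

lemma X4_B : (BGraph ({2,4,30} : Set ℕ)).IsAcyclic := by
  apply acyclic_of_height (fun u => match u with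
    | Sum.inl _ => 1
    | Sum.inr x => if (x : ℕ) = 30 then 0 else 2)
  · rintro (p | x) (q | y) h
    · exact h.elim
    · show (1:ℕ) ≠ if (y : ℕ) = 30 then 0 else 2
      split <;> omega
    · show (if (x : ℕ) = 30 then 0 else 2) ≠ (1:ℕ)
      split <;> omega
    · exact h.elim
  · rintro (p | x) (q | y) (r | z) h h' hlt hlt'
    any_goals first | exact h.elim | exact h'.elim
    · -- u = inl p, v = inr y, w = inr z : both lower neighbours are the vertex 30
      have h1 : (if (y : ℕ) = 30 then 0 else 2) < 1 := hlt
      have h2 : (if (z : ℕ) = 30 then 0 else 2) < 1 := hlt'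
      have hy : (y : ℕ) = 30 := by by_contra hc; rw [if_neg hc] at h1; omega
      have hz : (z : ℕ) = 30 := by by_contra hc; rw [if_neg hc] at h2; omega
      exact congrArg Sum.inr (Subtype.ext (hy.trans hz.symm))
    · -- u = inr x, v = inl q, w = inl r with x ∈ {2,4}
      have h1 : (1:ℕ) < if (x : ℕ) = 30 then 0 else 2 := hlt
      have hx30 : (x : ℕ) ≠ 30 := by intro e; rw [if_pos e] at h1; omega
      have hmem := x.2.1
      simp only [Set.mem_insert_iff, Set.mem_singleton_iff] at hmem
      have hdq : (q : ℕ) ∣ (x : ℕ) := h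
      have hdr : (r : ℕ) ∣ (x : ℕ) := h'
      have hq : (q : ℕ) = 2 := by
        rcases hmem with e | e | e
        · rw [e] at hdq; exact prime_dvd_2 q.2.1 hdq
        · rw [e] at hdq; exact prime_dvd_4 q.2.1 hdq
        · exact absurd e hx30
      have hr : (r : ℕ) = 2 := by
        rcases hmem with e | e | e
        · rw [e] at hdr; exact prime_dvd_2 r.2.1 hdr
        · rw [e] at hdr; exact prime_dvd_4 r.2.1 hdr
        · exact absurd e hx30
      exact congrArg Sum.inl (Subtype.ext (hq.trans hr.symm))

lemma X4_D : ¬ (DeltaGraph ({2,4,30} : Set ℕ)).IsAcyclic :=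
  Delta_not_acyclic_235 (m := 30) (by simp) dvd_rfl

lemma X4_G : ¬ (GammaGraph ({2,4,30} : Set ℕ)).IsAcyclic := by
  apply Gamma_not_acyclic_tri (a := 2) (b := 4) (c := 30)
    ⟨by simp, by norm_num⟩ ⟨by simp, by norm_num⟩ ⟨by simp, by norm_num⟩ <;> norm_num

/-! #### X₅ = {6,12} : Δ, Γ acyclic; B has a square -/

lemma X5_B : ¬ (BGraph ({6,12} : Set ℕ)).IsAcyclic :=
  BGraph_not_acyclic_sq (x := 6) (y := 12)
    ⟨by simp, by norm_num⟩ ⟨by simp, by norm_num⟩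
    (by norm_num) (by norm_num) (by norm_num) (by norm_num) (by norm_num)

lemma X5_rho : ∀ p ∈ rho ({6,12} : Set ℕ), p = 2 ∨ p = 3 := by
  rintro p ⟨hp, x, hx, hdx⟩
  simp only [Set.mem_insert_iff, Set.mem_singleton_iff] at hx
  rcases hx with rfl | rfl
  · exact prime_dvd_6 hp hdx
  · exact prime_dvd_12 hp hdx

lemma X5_D : (DeltaGraph ({6,12} : Set ℕ)).IsAcyclic := by
  have hp2 : (2:ℕ) ∈ rho ({6,12} : Set ℕ) := ⟨Nat.prime_two, 6, by simp, by norm_num⟩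
  have hp3 : (3:ℕ) ∈ rho ({6,12} : Set ℕ) := ⟨Nat.prime_three, 6, by simp, by norm_num⟩
  apply acyclic_of_two ⟨2, hp2⟩ ⟨3, hp3⟩
  intro v
  rcases X5_rho v v.2 with e | e
  · exact Or.inl (Subtype.ext e)
  · exact Or.inr (Subtype.ext e)

lemma X5_G : (GammaGraph ({6,12} : Set ℕ)).IsAcyclic := by
  have h6 : (6:ℕ) ∈ Xstar ({6,12} : Set ℕ) := ⟨by simp, by norm_num⟩
  have h12 : (12:ℕ) ∈ Xstar ({6,12} : Set ℕ) := ⟨by simp, by norm_num⟩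
  apply acyclic_of_two ⟨6, h6⟩ ⟨12, h12⟩
  rintro ⟨x, hx, -⟩
  simp only [Set.mem_insert_iff, Set.mem_singleton_iff] at hx
  rcases hx with rfl | rfl
  · exact Or.inl rfl
  · exact Or.inr rfl

/-! #### X₆ = {2,6,12} : Δ acyclic; B and Γ have cycles -/

lemma X6_B : ¬ (BGraph ({2,6,12} : Set ℕ)).IsAcyclic :=
  BGraph_not_acyclic_sq (x := 6) (y := 12)
    ⟨by simp, by norm_num⟩ ⟨by simp, by norm_num⟩
    (by norm_num) (by norm_num) (by norm_num) (by norm_num) (by norm_num)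

lemma X6_D : (DeltaGraph ({2,6,12} : Set ℕ)).IsAcyclic := by
  have hp2 : (2:ℕ) ∈ rho ({2,6,12} : Set ℕ) := ⟨Nat.prime_two, 6, by simp, by norm_num⟩
  have hp3 : (3:ℕ) ∈ rho ({2,6,12} : Set ℕ) := ⟨Nat.prime_three, 6, by simp, by norm_num⟩
  apply acyclic_of_two ⟨2, hp2⟩ ⟨3, hp3⟩
  rintro ⟨p, hp, x, hx, hdx⟩
  simp only [Set.mem_insert_iff, Set.mem_singleton_iff] at hx
  have : p = 2 ∨ p = 3 := by
    rcases hx with rfl | rfl | rfl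
    · exact Or.inl (prime_dvd_2 hp hdx)
    · exact prime_dvd_6 hp hdx
    · exact prime_dvd_12 hp hdx
  rcases this with e | e
  · exact Or.inl (Subtype.ext e)
  · exact Or.inr (Subtype.ext e)

lemma X6_G : ¬ (GammaGraph ({2,6,12} : Set ℕ)).IsAcyclic := by
  apply Gamma_not_acyclic_tri (a := 2) (b := 6) (c := 12)
    ⟨by simp, by norm_num⟩ ⟨by simp, by norm_num⟩ ⟨by simp, by norm_num⟩ <;> norm_num

/-! #### X₇ = {30,60} : Γ acyclic; B and Δ have cycles -/

lemma X7_B : ¬ (BGraph ({30,60} : Set ℕ)).IsAcyclic :=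
  BGraph_not_acyclic_sq (x := 30) (y := 60)
    ⟨by simp, by norm_num⟩ ⟨by simp, by norm_num⟩
    (by norm_num) (by norm_num) (by norm_num) (by norm_num) (by norm_num)

lemma X7_D : ¬ (DeltaGraph ({30,60} : Set ℕ)).IsAcyclic :=
  Delta_not_acyclic_235 (m := 30) (by simp) dvd_rfl

lemma X7_G : (GammaGraph ({30,60} : Set ℕ)).IsAcyclic := by
  have h30 : (30:ℕ) ∈ Xstar ({30,60} : Set ℕ) := ⟨by simp, by norm_num⟩
  have h60 : (60:ℕ) ∈ Xstar ({30,60} : Set ℕ) := ⟨by simp, by norm_num⟩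
  apply acyclic_of_two ⟨30, h30⟩ ⟨60, h60⟩
  rintro ⟨x, hx, -⟩
  simp only [Set.mem_insert_iff, Set.mem_singleton_iff] at hx
  rcases hx with rfl | rfl
  · exact Or.inl rfl
  · exact Or.inr rfl

/-! #### X₈ = {2,30,60} : all three have cycles -/

lemma X8_B : ¬ (BGraph ({2,30,60} : Set ℕ)).IsAcyclic :=
  BGraph_not_acyclic_sq (x := 30) (y := 60)
    ⟨by simp, by norm_num⟩ ⟨by simp, by norm_num⟩
    (by norm_num) (by norm_num) (by norm_num) (by norm_num) (by norm_num)

lemma X8_D : ¬ (DeltaGraph ({2,30,60} : Set ℕ)).IsAcyclic :=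
  Delta_not_acyclic_235 (m := 30) (by simp) dvd_rfl

lemma X8_G : ¬ (GammaGraph ({2,30,60} : Set ℕ)).IsAcyclic := by
  apply Gamma_not_acyclic_tri (a := 2) (b := 30) (c := 60)
    ⟨by simp, by norm_num⟩ ⟨by simp, by norm_num⟩ ⟨by simp, by norm_num⟩ <;> norm_num

/-! ### Basic facts common to all examples -/

lemma basic_facts {X : Set ℕ} {m : ℕ} (hm : m ∈ X) (hm1 : m ≠ 1) (h0 : ∀ x ∈ X, 0 < x) :
    X.Nonempty ∧ (∀ x ∈ X, 0 < x) ∧ X ≠ {1} := by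
  refine ⟨⟨m, hm⟩, h0, fun h => ?_⟩
  rw [h] at hm
  exact hm1 hm

theorem stmt_8 (bB bD bG : Bool) :
    ∃ X : Set ℕ, X.Nonempty ∧ (∀ x ∈ X, 0 < x) ∧ X ≠ {1} ∧
      ((BGraph X).IsAcyclic ↔ bB = true) ∧
      ((DeltaGraph X).IsAcyclic ↔ bD = true) ∧
      ((GammaGraph X).IsAcyclic ↔ bG = true) := by
  cases bB <;> cases bD <;> cases bG
  · -- B, Δ, Γ all cyclic : X = {2,30,60}
    obtain ⟨h1, h2, h3⟩ := basic_facts (X := {2,30,60}) (m := 2) (by simp) (by norm_num)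
      (by rintro x hx; simp only [Set.mem_insert_iff, Set.mem_singleton_iff] at hx
          rcases hx with rfl | rfl | rfl <;> norm_num)
    exact ⟨_, h1, h2, h3, iff_of_false X8_B (by simp), iff_of_false X8_D (by simp),
      iff_of_false X8_G (by simp)⟩
  · -- B, Δ cyclic; Γ acyclic : X = {30,60}
    obtain ⟨h1, h2, h3⟩ := basic_facts (X := {30,60}) (m := 30) (by simp) (by norm_num)
      (by rintro x hx; simp only [Set.mem_insert_iff, Set.mem_singleton_iff] at hx
          rcases hx with rfl | rfl <;> norm_num)
    exact ⟨_, h1, h2, h3, iff_of_false X7_B (by simp), iff_of_false X7_D (by simp),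
      iff_of_true X7_G rfl⟩
  · -- B, Γ cyclic; Δ acyclic : X = {2,6,12}
    obtain ⟨h1, h2, h3⟩ := basic_facts (X := {2,6,12}) (m := 2) (by simp) (by norm_num)
      (by rintro x hx; simp only [Set.mem_insert_iff, Set.mem_singleton_iff] at hx
          rcases hx with rfl | rfl | rfl <;> norm_num)
    exact ⟨_, h1, h2, h3, iff_of_false X6_B (by simp), iff_of_true X6_D rfl,
      iff_of_false X6_G (by simp)⟩
  · -- B cyclic; Δ, Γ acyclic : X = {6,12}
    obtain ⟨h1, h2, h3⟩ := basic_facts (X := {6,12}) (m := 6) (by simp) (by norm_num)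
      (by rintro x hx; simp only [Set.mem_insert_iff, Set.mem_singleton_iff] at hx
          rcases hx with rfl | rfl <;> norm_num)
    exact ⟨_, h1, h2, h3, iff_of_false X5_B (by simp), iff_of_true X5_D rfl,
      iff_of_true X5_G rfl⟩
  · -- B acyclic; Δ, Γ cyclic : X = {2,4,30}
    obtain ⟨h1, h2, h3⟩ := basic_facts (X := {2,4,30}) (m := 2) (by simp) (by norm_num)
      (by rintro x hx; simp only [Set.mem_insert_iff, Set.mem_singleton_iff] at hx
          rcases hx with rfl | rfl | rfl <;> norm_num)
    exact ⟨_, h1, h2, h3, iff_of_true X4_B rfl, iff_of_false X4_D (by simp),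
      iff_of_false X4_G (by simp)⟩
  · -- B, Γ acyclic; Δ cyclic : X = {30}
    obtain ⟨h1, h2, h3⟩ := basic_facts (X := {30}) (m := 30) rfl (by norm_num)
      (by rintro x hx; simp only [Set.mem_singleton_iff] at hx; subst hx; norm_num)
    exact ⟨_, h1, h2, h3, iff_of_true X3_B rfl, iff_of_false X3_D (by simp),
      iff_of_true X3_G rfl⟩
  · -- B, Δ acyclic; Γ cyclic : X = {2,4,8}
    obtain ⟨h1, h2, h3⟩ := basic_facts (X := {2,4,8}) (m := 2) (by simp) (by norm_num)
      (by rintro x hx; simp only [Set.mem_insert_iff, Set.mem_singleton_iff] at hx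
          rcases hx with rfl | rfl | rfl <;> norm_num)
    exact ⟨_, h1, h2, h3, iff_of_true X2_B rfl, iff_of_true X2_D rfl,
      iff_of_false X2_G (by simp)⟩
  · -- all acyclic : X = {2}
    obtain ⟨h1, h2, h3⟩ := basic_facts (X := {2}) (m := 2) rfl (by norm_num)
      (by rintro x hx; simp only [Set.mem_singleton_iff] at hx; subst hx; norm_num)
    exact ⟨_, h1, h2, h3, iff_of_true X1_B rfl, iff_of_true X1_D rfl, iff_of_true X1_G rfl⟩
end

section
/- Let ℓ ≥ 2. The graph B(X) contains a subgraph isomorphic to Inc(K_ℓ) if and only if one of the following holds: (i) Γ(X) contains a complete subgraph K_ℓ with vertices x_1, …, x_ℓ ∈ X*, and there exist (ℓ choose 2) pairwise distinct primes p_{ij}, for 1 ≤ i < j ≤ ℓ, such that p_{ij} divides gcd(x_i, x_j); or (ii) Δ(X) contains a complete subgraph K_ℓ with vertices p_1, …, p_ℓ ∈ ρ(X), and there exist (ℓ choose 2) pairwise distinct elements x_{ij} ∈ X*, for 1 ≤ i < j ≤ ℓ, such that p_i·p_j divides x_{ij}. -/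
open SimpleGraph

/-- The incidence graph of a graph `G`: the bipartite graph on `V ⊔ E(G)` in which
a vertex `v` and an edge `e` are adjacent iff `v` is an endpoint of `e`. -/
def IncGraph {V : Type*} (G : SimpleGraph V) : SimpleGraph (V ⊕ ↥G.edgeSet) where
  Adj u w :=
    match u, w with
    | Sum.inl v, Sum.inr e => v ∈ (e : Sym2 V)
    | Sum.inr e, Sum.inl v => v ∈ (e : Sym2 V)
    | _, _ => False
  symm := ⟨by rintro (v | e) (v' | e') h <;> exact h⟩
  loopless := ⟨by rintro (v | e) h <;> exact h⟩

/-- `G` contains a subgraph isomorphic to `H`: an injective map from the vertices of `H`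
to the vertices of `G` carrying edges of `H` to edges of `G`. -/
def ContainsSub {V W : Type*} (G : SimpleGraph V) (H : SimpleGraph W) : Prop :=
  ∃ f : W → V, Function.Injective f ∧ ∀ u v, H.Adj u v → G.Adj (f u) (f v)

section AuxStmt12

/-- Symmetrize a two-variable family over ordered pairs to a function on `Sym2`. -/
def symFam {α β : Type*} [LinearOrder α] (p : α → α → β) : Sym2 α → β :=
  Sym2.lift ⟨fun i j => p (min i j) (max i j), fun i j => by simp only [min_comm i j, max_comm i j]⟩

lemma symFam_mk {α β : Type*} [LinearOrder α] (p : α → α → β) {i j : α} (h : i < j) :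
    symFam p s(i, j) = p i j := by
  simp [symFam, min_eq_left h.le, max_eq_right h.le]

lemma exists_lt_rep {α : Type*} [LinearOrder α] (e : Sym2 α) (he : ¬ e.IsDiag) :
    ∃ i j, i < j ∧ e = s(i, j) := by
  induction e using Sym2.ind with
  | _ a b =>
    rw [Sym2.mk_isDiag_iff] at he
    rcases lt_or_gt_of_ne he with h | h
    · exact ⟨a, b, h, rfl⟩
    · exact ⟨b, a, h, Sym2.eq_swap⟩

lemma smk_ne {α : Type*} [LinearOrder α] {i j i' j' : α} (h : i < j) (h' : i' < j')
    (hne : (i, j) ≠ (i', j')) : s(i, j) ≠ s(i', j') := by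
  intro heq
  rw [Sym2.eq_iff] at heq
  rcases heq with ⟨rfl, rfl⟩ | ⟨rfl, rfl⟩
  · exact hne rfl
  · exact lt_asymm h h'

end AuxStmt12

theorem stmt_12 (X : Set ℕ) (hne : X.Nonempty) (hpos : ∀ x ∈ X, 0 < x)
    (hX1 : X ≠ {1}) (ℓ : ℕ) (hℓ : 2 ≤ ℓ) :
    ContainsSub (BGraph X) (IncGraph (⊤ : SimpleGraph (Fin ℓ))) ↔
    ((∃ x : Fin ℓ → ↥(Xstar X), Function.Injective x ∧
        (∀ i j, i ≠ j → (GammaGraph X).Adj (x i) (x j)) ∧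
        ∃ p : Fin ℓ → Fin ℓ → ℕ,
          (∀ i j, i < j → (p i j).Prime ∧ p i j ∣ Nat.gcd (x i : ℕ) (x j : ℕ)) ∧
          (∀ i j i' j', i < j → i' < j' → (i, j) ≠ (i', j') → p i j ≠ p i' j')) ∨
     (∃ q : Fin ℓ → ↥(rho X), Function.Injective q ∧
        (∀ i j, i ≠ j → (DeltaGraph X).Adj (q i) (q j)) ∧
        ∃ z : Fin ℓ → Fin ℓ → ℕ,
          (∀ i j, i < j → z i j ∈ Xstar X ∧ (q i : ℕ) * (q j : ℕ) ∣ z i j) ∧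
          (∀ i j i' j', i < j → i' < j' → (i, j) ≠ (i', j') → z i j ≠ z i' j'))) := by
  classical
  have hXsub : Xstar X ⊆ X := fun y hy => hy.1
  have hmemE : ∀ i j : Fin ℓ, i ≠ j → s(i, j) ∈ (⊤ : SimpleGraph (Fin ℓ)).edgeSet := by
    intro i j h; simpa [SimpleGraph.mem_edgeSet] using h
  constructor
  · rintro ⟨f, hinj, hadj⟩
    set i0 : Fin ℓ := ⟨0, by omega⟩ with hi0
    have hIncAdj : ∀ (i : Fin ℓ) (e : ↥(⊤ : SimpleGraph (Fin ℓ)).edgeSet),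
        i ∈ (e : Sym2 (Fin ℓ)) → (BGraph X).Adj (f (Sum.inl i)) (f (Sum.inr e)) := by
      intro i e hmem
      exact hadj _ _ hmem
    rcases hf0 : f (Sum.inl i0) with p0 | x0
    · -- primes side: Δ case
      have hv : ∀ i : Fin ℓ, ∃ qi : ↥(rho X), f (Sum.inl i) = Sum.inl qi := by
        intro i
        by_cases hi : i = i0
        · subst hi; exact ⟨p0, hf0⟩
        · set e : ↥(⊤ : SimpleGraph (Fin ℓ)).edgeSet :=
            ⟨s(i0, i), hmemE i0 i (fun h => hi h.symm)⟩ with he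
          have h1 := hIncAdj i0 e (Sym2.mem_mk_left i0 i)
          have h2 := hIncAdj i e (Sym2.mem_mk_right i0 i)
          rw [hf0] at h1
          rcases he' : f (Sum.inr e) with pe | ze
          · rw [he'] at h1; exact h1.elim
          · rw [he'] at h2
            rcases hfi : f (Sum.inl i) with qi | yi
            · exact ⟨qi, rfl⟩
            · rw [hfi] at h2; exact h2.elim
      have hedge : ∀ e : ↥(⊤ : SimpleGraph (Fin ℓ)).edgeSet,
          ∃ ze : ↥(Xstar X), f (Sum.inr e) = Sum.inr ze := by
        intro e
        obtain ⟨i, j, hij, hrep⟩ := exists_lt_rep (e : Sym2 (Fin ℓ))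
          ((⊤ : SimpleGraph (Fin ℓ)).not_isDiag_of_mem_edgeSet e.2)
        have h1 := hIncAdj i e (by rw [hrep]; exact Sym2.mem_mk_left i j)
        obtain ⟨qi, hqi⟩ := hv i
        rw [hqi] at h1
        rcases he' : f (Sum.inr e) with pe | ze
        · rw [he'] at h1; exact h1.elim
        · exact ⟨ze, rfl⟩
      choose q hq using hv
      choose Z hZ using hedge
      have qinj : Function.Injective q := by
        intro a b hab
        have : f (Sum.inl a) = f (Sum.inl b) := by rw [hq a, hq b, hab]
        exact Sum.inl_injective (hinj this)
      have hdvd : ∀ (i : Fin ℓ) (e : ↥(⊤ : SimpleGraph (Fin ℓ)).edgeSet),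
          i ∈ (e : Sym2 (Fin ℓ)) → (q i : ℕ) ∣ (Z e : ℕ) := by
        intro i e hmem
        have h1 := hIncAdj i e hmem
        rw [hq i, hZ e] at h1
        exact h1
      set E : ∀ i j : Fin ℓ, i ≠ j → ↥(⊤ : SimpleGraph (Fin ℓ)).edgeSet :=
        fun i j h => ⟨s(i, j), hmemE i j h⟩ with hE
      have hmul : ∀ i j : Fin ℓ, ∀ h : i ≠ j,
          (q i : ℕ) * (q j : ℕ) ∣ (Z (E i j h) : ℕ) := by
        intro i j h
        have h1 := hdvd i (E i j h) (Sym2.mem_mk_left i j)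
        have h2 := hdvd j (E i j h) (Sym2.mem_mk_right i j)
        have hval : (q i : ℕ) ≠ (q j : ℕ) := fun hv => h (qinj (Subtype.ext hv))
        exact Nat.Coprime.mul_dvd_of_dvd_of_dvd
          ((Nat.coprime_primes (q i).2.1 (q j).2.1).mpr hval) h1 h2
      refine Or.inr ⟨q, qinj, ?_, fun i j => if h : i < j then (Z (E i j h.ne) : ℕ) else 0,
        ?_, ?_⟩
      · intro i j hij
        refine ⟨fun h => hij (qinj h), (Z (E i j hij) : ℕ), hXsub (Z (E i j hij)).2,
          hmul i j hij⟩
      · intro i j hij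
        simp only [dif_pos hij]
        exact ⟨(Z (E i j hij.ne)).2, hmul i j hij.ne⟩
      · intro i j i' j' h h' hpair
        simp only [dif_pos h, dif_pos h']
        intro hzz
        have hfe : f (Sum.inr (E i j h.ne)) = f (Sum.inr (E i' j' h'.ne)) := by
          rw [hZ, hZ]; exact congrArg Sum.inr (Subtype.ext hzz)
        exact smk_ne h h' hpair
          (congrArg Subtype.val (Sum.inr_injective (hinj hfe)))
    · -- elements side: Γ case
      have hv : ∀ i : Fin ℓ, ∃ yi : ↥(Xstar X), f (Sum.inl i) = Sum.inr yi := by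
        intro i
        by_cases hi : i = i0
        · subst hi; exact ⟨x0, hf0⟩
        · set e : ↥(⊤ : SimpleGraph (Fin ℓ)).edgeSet :=
            ⟨s(i0, i), hmemE i0 i (fun h => hi h.symm)⟩ with he
          have h1 := hIncAdj i0 e (Sym2.mem_mk_left i0 i)
          have h2 := hIncAdj i e (Sym2.mem_mk_right i0 i)
          rw [hf0] at h1
          rcases he' : f (Sum.inr e) with pe | ze
          · rw [he'] at h2
            rcases hfi : f (Sum.inl i) with qi | yi
            · rw [hfi] at h2; exact h2.elim
            · exact ⟨yi, rfl⟩
          · rw [he'] at h1; exact h1.elim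
      have hedge : ∀ e : ↥(⊤ : SimpleGraph (Fin ℓ)).edgeSet,
          ∃ pe : ↥(rho X), f (Sum.inr e) = Sum.inl pe := by
        intro e
        obtain ⟨i, j, hij, hrep⟩ := exists_lt_rep (e : Sym2 (Fin ℓ))
          ((⊤ : SimpleGraph (Fin ℓ)).not_isDiag_of_mem_edgeSet e.2)
        have h1 := hIncAdj i e (by rw [hrep]; exact Sym2.mem_mk_left i j)
        obtain ⟨yi, hyi⟩ := hv i
        rw [hyi] at h1
        rcases he' : f (Sum.inr e) with pe | ze
        · exact ⟨pe, rfl⟩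
        · rw [he'] at h1; exact h1.elim
      choose x hx using hv
      choose P hP using hedge
      have xinj : Function.Injective x := by
        intro a b hab
        have : f (Sum.inl a) = f (Sum.inl b) := by rw [hx a, hx b, hab]
        exact Sum.inl_injective (hinj this)
      have hdvd : ∀ (i : Fin ℓ) (e : ↥(⊤ : SimpleGraph (Fin ℓ)).edgeSet),
          i ∈ (e : Sym2 (Fin ℓ)) → (P e : ℕ) ∣ (x i : ℕ) := by
        intro i e hmem
        have h1 := hIncAdj i e hmem
        rw [hx i, hP e] at h1
        exact h1
      set E : ∀ i j : Fin ℓ, i ≠ j → ↥(⊤ : SimpleGraph (Fin ℓ)).edgeSet :=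
        fun i j h => ⟨s(i, j), hmemE i j h⟩ with hE
      have hgcd : ∀ i j : Fin ℓ, ∀ h : i ≠ j,
          (P (E i j h) : ℕ) ∣ Nat.gcd (x i : ℕ) (x j : ℕ) := by
        intro i j h
        exact Nat.dvd_gcd (hdvd i (E i j h) (Sym2.mem_mk_left i j))
          (hdvd j (E i j h) (Sym2.mem_mk_right i j))
      refine Or.inl ⟨x, xinj, ?_, fun i j => if h : i < j then (P (E i j h.ne) : ℕ) else 0,
        ?_, ?_⟩
      · intro i j hij
        refine ⟨fun h => hij (xinj h), ?_⟩
        have hgpos : 0 < Nat.gcd (x i : ℕ) (x j : ℕ) :=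
          Nat.gcd_pos_of_pos_left _ (hpos _ (hXsub (x i).2))
        exact lt_of_lt_of_le (P (E i j hij)).2.1.one_lt (Nat.le_of_dvd hgpos (hgcd i j hij))
      · intro i j hij
        simp only [dif_pos hij]
        exact ⟨(P (E i j hij.ne)).2.1, hgcd i j hij.ne⟩
      · intro i j i' j' h h' hpair
        simp only [dif_pos h, dif_pos h']
        intro hzz
        have hfe : f (Sum.inr (E i j h.ne)) = f (Sum.inr (E i' j' h'.ne)) := by
          rw [hP, hP]; exact congrArg Sum.inl (Subtype.ext hzz)
        exact smk_ne h h' hpair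
          (congrArg Subtype.val (Sum.inr_injective (hinj hfe)))
  · rintro (⟨x, hxinj, hxadj, p, hp1, hp2⟩ | ⟨q, hqinj, hqadj, z, hz1, hz2⟩)
    · -- Γ case gives embedding
      have hmem : ∀ e : ↥(⊤ : SimpleGraph (Fin ℓ)).edgeSet,
          symFam p (e : Sym2 (Fin ℓ)) ∈ rho X := by
        intro e
        obtain ⟨i, j, hij, hrep⟩ := exists_lt_rep (e : Sym2 (Fin ℓ))
          ((⊤ : SimpleGraph (Fin ℓ)).not_isDiag_of_mem_edgeSet e.2)
        rw [hrep, symFam_mk p hij]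
        obtain ⟨hprime, hdvd⟩ := hp1 i j hij
        exact ⟨hprime, (x i : ℕ), hXsub (x i).2, hdvd.trans (Nat.gcd_dvd_left _ _)⟩
      have main : ∀ (v : Fin ℓ) (e : ↥(⊤ : SimpleGraph (Fin ℓ)).edgeSet),
          v ∈ (e : Sym2 (Fin ℓ)) → symFam p (e : Sym2 (Fin ℓ)) ∣ (x v : ℕ) := by
        intro v e hv
        obtain ⟨i, j, hij, hrep⟩ := exists_lt_rep (e : Sym2 (Fin ℓ))
          ((⊤ : SimpleGraph (Fin ℓ)).not_isDiag_of_mem_edgeSet e.2)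
        rw [hrep, symFam_mk p hij]
        rw [hrep, Sym2.mem_iff] at hv
        rcases hv with rfl | rfl
        · exact (hp1 v j hij).2.trans (Nat.gcd_dvd_left _ _)
        · exact (hp1 i v hij).2.trans (Nat.gcd_dvd_right _ _)
      refine ⟨Sum.elim (fun i => Sum.inr (x i))
        (fun e => Sum.inl ⟨symFam p (e : Sym2 (Fin ℓ)), hmem e⟩), ?_, ?_⟩
      · rintro (a | e) (b | e') hfeq <;>
          simp only [Sum.elim_inl, Sum.elim_inr] at hfeq
        · exact congrArg Sum.inl (hxinj (Sum.inr_injective hfeq))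
        · simp at hfeq
        · simp at hfeq
        · obtain ⟨i, j, hij, hrep⟩ := exists_lt_rep (e : Sym2 (Fin ℓ))
            ((⊤ : SimpleGraph (Fin ℓ)).not_isDiag_of_mem_edgeSet e.2)
          obtain ⟨i', j', hij', hrep'⟩ := exists_lt_rep (e' : Sym2 (Fin ℓ))
            ((⊤ : SimpleGraph (Fin ℓ)).not_isDiag_of_mem_edgeSet e'.2)
          have hv : symFam p (e : Sym2 (Fin ℓ)) = symFam p (e' : Sym2 (Fin ℓ)) :=
            congrArg Subtype.val (Sum.inl_injective hfeq)
          rw [hrep, hrep', symFam_mk p hij, symFam_mk p hij'] at hv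
          by_cases hpair : (i, j) = (i', j')
          · refine congrArg Sum.inr (Subtype.ext ?_)
            rw [Prod.mk.injEq] at hpair
            rw [hrep, hrep', hpair.1, hpair.2]
          · exact absurd hv (hp2 i j i' j' hij hij' hpair)
      · rintro (a | e) (b | e') h2
        · exact h2.elim
        · exact main a e' h2
        · exact main b e h2
        · exact h2.elim
    · -- Δ case gives embedding
      have hmem : ∀ e : ↥(⊤ : SimpleGraph (Fin ℓ)).edgeSet,
          symFam z (e : Sym2 (Fin ℓ)) ∈ Xstar X := by
        intro e
        obtain ⟨i, j, hij, hrep⟩ := exists_lt_rep (e : Sym2 (Fin ℓ))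
          ((⊤ : SimpleGraph (Fin ℓ)).not_isDiag_of_mem_edgeSet e.2)
        rw [hrep, symFam_mk z hij]
        exact (hz1 i j hij).1
      have main : ∀ (v : Fin ℓ) (e : ↥(⊤ : SimpleGraph (Fin ℓ)).edgeSet),
          v ∈ (e : Sym2 (Fin ℓ)) → (q v : ℕ) ∣ symFam z (e : Sym2 (Fin ℓ)) := by
        intro v e hv
        obtain ⟨i, j, hij, hrep⟩ := exists_lt_rep (e : Sym2 (Fin ℓ))
          ((⊤ : SimpleGraph (Fin ℓ)).not_isDiag_of_mem_edgeSet e.2)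
        rw [hrep, symFam_mk z hij]
        rw [hrep, Sym2.mem_iff] at hv
        rcases hv with rfl | rfl
        · exact (dvd_mul_right _ _).trans (hz1 v j hij).2
        · exact (dvd_mul_left _ _).trans (hz1 i v hij).2
      refine ⟨Sum.elim (fun i => Sum.inl (q i))
        (fun e => Sum.inr ⟨symFam z (e : Sym2 (Fin ℓ)), hmem e⟩), ?_, ?_⟩
      · rintro (a | e) (b | e') hfeq <;>
          simp only [Sum.elim_inl, Sum.elim_inr] at hfeq
        · exact congrArg Sum.inl (hqinj (Sum.inl_injective hfeq))
        · simp at hfeq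
        · simp at hfeq
        · obtain ⟨i, j, hij, hrep⟩ := exists_lt_rep (e : Sym2 (Fin ℓ))
            ((⊤ : SimpleGraph (Fin ℓ)).not_isDiag_of_mem_edgeSet e.2)
          obtain ⟨i', j', hij', hrep'⟩ := exists_lt_rep (e' : Sym2 (Fin ℓ))
            ((⊤ : SimpleGraph (Fin ℓ)).not_isDiag_of_mem_edgeSet e'.2)
          have hv : symFam z (e : Sym2 (Fin ℓ)) = symFam z (e' : Sym2 (Fin ℓ)) :=
            congrArg Subtype.val (Sum.inr_injective hfeq)
          rw [hrep, hrep', symFam_mk z hij, symFam_mk z hij'] at hv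
          by_cases hpair : (i, j) = (i', j')
          · refine congrArg Sum.inr (Subtype.ext ?_)
            rw [Prod.mk.injEq] at hpair
            rw [hrep, hrep', hpair.1, hpair.2]
          · exact absurd hv (hz2 i j i' j' hij hij' hpair)
      · rintro (a | e) (b | e') h2
        · exact h2.elim
        · exact main a e' h2
        · exact main b e h2
        · exact h2.elim
end
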